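/- Let q ≥ 2 and d ≥ 1 be integers, c > 0 and A > 0, and let f : ℕ → ℂ be a q-multiplicative sequence with |f(n)| = 1 for all n. Suppose that for every integer L ≥ 0 and every real polynomial p of degree at most d, |(1/q^L)·∑_{n=0}^{q^L−1} f(n) e(p(n))| ≤ A·q^{−cL}. Then there exists a constant C > 0 (depending only on q, d, c, A) such that for every integer M ≥ 0, every integer N ≥ 1, and every real polynomial p of degree at most d, |(1/N)·∑_{n=0}^{N−1} f(n+M) e(p(n))| ≤ C·N^{−c}. -/

import Mathlib

open Finset Complex

noncomputable section

/-- A sequence is `q`-multiplicative if `f (m + n) = f m * f n` whenever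
`m < q ^ t` and `q ^ t ∣ n`. -/
def QMult (q : ℕ) (f : ℕ → ℂ) : Prop :=
  ∀ t m n : ℕ, m < q ^ t → q ^ t ∣ n → f (m + n) = f m * f n

/-- `e x = exp (2 π i x)`. -/
def e (x : ℝ) : ℂ := Complex.exp (2 * Real.pi * Complex.I * x)

/-- The weight `|ω|` of `ω ∈ {0,1}^s`: the number of coordinates equal to `1`. -/
def wt {s : ℕ} (ω : Fin s → Bool) : ℕ := (Finset.univ.filter fun i => ω i = true).card

/-- The vertex `n₀ + ω₁ n₁ + ⋯ + ω_s n_s` of a parallelepiped. -/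
def vertex (s : ℕ) (n : Fin (s + 1) → ℤ) (ω : Fin s → Bool) : ℤ :=
  n 0 + ∑ i : Fin s, if ω i then n i.succ else 0

/-- The set `Π_s(N)` of (s+1)-tuples all of whose associated vertices lie ∈ `[0, N)`.
(Any such tuple automatically has all entries in `[-N, N]`.) -/
def PiSet (s N : ℕ) : Finset (Fin (s + 1) → ℤ) :=
  (Finset.Icc (fun _ => -(N : ℤ)) fun _ => (N : ℤ)).filter fun n =>
    ∀ ω : Fin s → Bool, 0 ≤ vertex s n ω ∧ vertex s n ω < N

/-- The Gowers product `∏_ω conj^{|ω|} f(n₀ + ω·n)`. -/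
def gowersTerm (s : ℕ) (f : ℕ → ℂ) (n : Fin (s + 1) → ℤ) : ℂ :=
  ∏ ω : Fin s → Bool, (starRingEnd ℂ)^[wt ω] (f (vertex s n ω).toNat)

/-- The Gowers average `‖f‖_{U^s[N]}^{2^s}` (as a complex number; it is in fact
real and nonnegative). -/
def gowersAvg (s N : ℕ) (f : ℕ → ℂ) : ℂ :=
  (∑ n ∈ PiSet s N, gowersTerm s f n) / (PiSet s N).card

/-- The Gowers uniformity norm `‖f‖_{U^s[N]}`. -/
def gowersNorm (s N : ℕ) (f : ℕ → ℂ) : ℝ :=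
  (gowersAvg s N f).re ^ ((1 : ℝ) / 2 ^ s)

/-- Sum of digits of `n` in base `q`. -/
def digitSum (q n : ℕ) : ℕ := (Nat.digits q n).sum

end


section Aux

lemma e_abs (x : ℝ) : ‖e x‖ = 1 := by
  have : (2 * Real.pi * Complex.I * (x:ℂ)) = ((2*Real.pi*x : ℝ):ℂ) * Complex.I := by
    push_cast; ring
  rw [e, this, Complex.norm_exp_ofReal_mul_I]

lemma e_add (a b : ℝ) : e (a + b) = e a * e b := by
  rw [e, e, e, ← Complex.exp_add]; congr 1; push_cast; ring

lemma e_conj (a : ℝ) : (starRingEnd ℂ) (e a) = e (-a) := by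
  rw [e, e, ← Complex.exp_conj]; congr 1
  rw [map_mul, map_mul, map_mul, Complex.conj_I, Complex.conj_ofReal, Complex.conj_ofReal,
    map_ofNat]
  push_cast; ring

lemma e_nat_mul (k : ℕ) (x : ℝ) : e ((k:ℝ) * x) = (e x)^k := by
  rw [e, e, ← Complex.exp_nat_mul]; congr 1; push_cast; ring

lemma e_zero : e 0 = 1 := by simp [e]

lemma ortho (K n m : ℕ) (hK : 0 < K) (hn : n < K) (hm : m < K) :
    ∑ k ∈ Finset.range K, (e (((n:ℝ) - m)/K))^k = if n = m then (K:ℂ) else 0 := by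
  by_cases hnm : n = m
  · subst hnm
    simp [show ((n:ℝ) - n)/K = 0 by ring, e_zero]
  · rw [if_neg hnm]
    have hKne : (K:ℝ) ≠ 0 := Nat.cast_ne_zero.mpr hK.ne'
    have hne : e (((n:ℝ) - m)/K) ≠ 1 := by
      intro heq
      rw [e, Complex.exp_eq_one_iff] at heq
      obtain ⟨t, ht⟩ := heq
      have h2 : (2 * (Real.pi:ℂ) * Complex.I) * ((((n:ℝ) - m)/K : ℝ):ℂ)
          = (2 * (Real.pi:ℂ) * Complex.I) * (t:ℂ) := by rw [ht]; ring
      have h3 : ((((n:ℝ) - m)/K : ℝ):ℂ) = (t:ℂ) := mul_left_cancel₀ Complex.two_pi_I_ne_zero h2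
      have h4 : ((n:ℝ) - m)/K = (t:ℝ) := by exact_mod_cast h3
      have h5 : (n:ℝ) - m = t * K := by field_simp at h4; linarith [h4]
      have h6 : (n:ℤ) - m = t * K := by exact_mod_cast h5
      have hK' : (0:ℤ) < K := by exact_mod_cast hK
      have h7 : (n:ℤ) - m < K := by omega
      have h8 : -(K:ℤ) < (n:ℤ) - m := by omega
      rcases lt_trichotomy t 0 with h | h | h
      · have ht1 : t ≤ -1 := by omega
        nlinarith
      · rw [h] at h6; simp at h6; omega
      · have ht1 : 1 ≤ t := h
        nlinarith
    rw [geom_sum_eq hne]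
    have hpow : (e (((n:ℝ) - m)/K))^K = 1 := by
      rw [← e_nat_mul]
      have h1 : (K:ℝ) * (((n:ℝ) - m)/K) = ((((n:ℤ) - m : ℤ)):ℝ) := by push_cast; field_simp
      rw [h1, e]
      have h2 : (2 * (Real.pi:ℂ) * Complex.I) * (((((n:ℤ) - m : ℤ)):ℝ):ℂ)
          = (((n:ℤ) - m : ℤ):ℂ) * (2 * (Real.pi:ℂ) * Complex.I) := by push_cast; ring
      rw [h2, Complex.exp_int_mul_two_pi_mul_I]
    rw [hpow]
    simp

lemma no_big_c (q d : ℕ) (hq : 2 ≤ q) (hd : 1 ≤ d) (c A : ℝ) (hc1 : 1 ≤ c) (hA : 0 < A)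
    (f : ℕ → ℂ) (hmod : ∀ n, ‖f n‖ = 1)
    (h : ∀ L : ℕ, ∀ p : Polynomial ℝ, p.natDegree ≤ d →
      ‖(∑ n ∈ Finset.range (q ^ L), f n * e (p.eval (n : ℝ))) / (q ^ L : ℕ)‖
        ≤ A * (q : ℝ) ^ (-(c * L))) : False := by
  have hq0 : (0:ℝ) < q := by positivity
  have hq1 : (1:ℝ) < q := by
    have : (1:ℕ) < q := by omega
    exact_mod_cast this
  obtain ⟨L, hL⟩ := pow_unbounded_of_one_lt (A^2) hq1
  set K := q ^ L with hKdef
  have hKpos : 0 < K := Nat.pow_pos (by omega)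
  have hKR : (0:ℝ) < K := by exact_mod_cast hKpos
  set S : ℕ → ℂ := fun k => ∑ n ∈ Finset.range K, f n * e ((k:ℝ) * n / K) with hS
  have hSb : ∀ k, ‖S k‖ ≤ A := by
    intro k
    set p : Polynomial ℝ := Polynomial.C ((k:ℝ)/K) * Polynomial.X with hp
    have hdeg : p.natDegree ≤ d := by
      calc p.natDegree ≤ Polynomial.X.natDegree := Polynomial.natDegree_C_mul_le _ _
        _ ≤ d := by simp [hd]
    have heval : ∀ n : ℕ, p.eval (n:ℝ) = (k:ℝ) * n / K := by
      intro n; simp [hp]; ring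
    have h1 := h L p hdeg
    have h2 : (∑ n ∈ Finset.range (q ^ L), f n * e (p.eval (n : ℝ))) = S k := by
      apply Finset.sum_congr rfl
      intro n _; rw [heval n]
    rw [h2] at h1
    have h3 : ‖S k / (K : ℕ)‖ = ‖S k‖ / K := by
      rw [norm_div]; simp
    rw [← hKdef] at h1
    rw [h3] at h1
    have h4 : ‖S k‖ ≤ A * (q:ℝ) ^ (-(c * L)) * K := by
      rw [div_le_iff₀ hKR] at h1; exact h1
    have h5 : A * (q:ℝ) ^ (-(c * L)) * K ≤ A := by
      have hKr : (K:ℝ) = (q:ℝ) ^ (L:ℝ) := by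
        rw [Real.rpow_natCast]; exact_mod_cast rfl
      rw [hKr, mul_assoc, ← Real.rpow_add hq0]
      have hexp : -(c*L) + L ≤ 0 := by
        have : (1:ℝ) * L ≤ c * L := by
          apply mul_le_mul_of_nonneg_right hc1 (by positivity)
        linarith
      have : (q:ℝ) ^ (-(c*L) + (L:ℝ)) ≤ 1 :=
        Real.rpow_le_one_of_one_le_of_nonpos (le_of_lt hq1) hexp
      nlinarith
    linarith
  have hpar : ((K:ℝ))^2 = ∑ k ∈ Finset.range K, Complex.normSq (S k) := by
    have key : ∑ k ∈ Finset.range K, (S k * (starRingEnd ℂ) (S k)) = ((K:ℂ))^2 := by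
      have expand : ∀ k, S k * (starRingEnd ℂ) (S k)
          = ∑ n ∈ Finset.range K, ∑ m ∈ Finset.range K,
              f n * (starRingEnd ℂ) (f m) * (e (((n:ℝ) - m)/K))^k := by
        intro k
        rw [hS]
        simp only [map_sum]
        rw [Finset.sum_mul_sum]
        apply Finset.sum_congr rfl; intro n _
        apply Finset.sum_congr rfl; intro m _
        rw [map_mul, e_conj, ← e_nat_mul]
        rw [mul_mul_mul_comm, ← e_add]
        congr 2
        field_simp
        ring
      calc ∑ k ∈ Finset.range K, (S k * (starRingEnd ℂ) (S k))
          = ∑ k ∈ Finset.range K, ∑ n ∈ Finset.range K, ∑ m ∈ Finset.range K,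
              f n * (starRingEnd ℂ) (f m) * (e (((n:ℝ) - m)/K))^k := by
            apply Finset.sum_congr rfl; intro k _; exact expand k
        _ = ∑ n ∈ Finset.range K, ∑ m ∈ Finset.range K,
              f n * (starRingEnd ℂ) (f m) * ∑ k ∈ Finset.range K, (e (((n:ℝ) - m)/K))^k := by
            rw [Finset.sum_comm]
            apply Finset.sum_congr rfl; intro n _
            rw [Finset.sum_comm]
            apply Finset.sum_congr rfl; intro m _
            rw [Finset.mul_sum]
        _ = ∑ n ∈ Finset.range K, ∑ m ∈ Finset.range K,
              (if n = m then f n * (starRingEnd ℂ) (f m) * K else 0) := by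
            apply Finset.sum_congr rfl; intro n hn
            apply Finset.sum_congr rfl; intro m hm
            rw [ortho K n m hKpos (Finset.mem_range.mp hn) (Finset.mem_range.mp hm)]
            by_cases hnm : n = m <;> simp [hnm]
        _ = ∑ n ∈ Finset.range K, f n * (starRingEnd ℂ) (f n) * K := by
            apply Finset.sum_congr rfl; intro n hn
            rw [Finset.sum_ite_eq (Finset.range K) n (fun m => f n * (starRingEnd ℂ) (f m) * (K:ℂ))]
            simp [Finset.mem_range.mp hn]
        _ = ∑ n ∈ Finset.range K, (K:ℂ) := by
            apply Finset.sum_congr rfl; intro n _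
            rw [Complex.mul_conj, Complex.normSq_eq_norm_sq, hmod n]
            simp
        _ = ((K:ℂ))^2 := by simp [Finset.sum_const]; ring
    have key2 : ∑ k ∈ Finset.range K, ((Complex.normSq (S k) : ℝ) : ℂ) = ((K:ℂ))^2 := by
      rw [← key]; apply Finset.sum_congr rfl; intro k _; rw [Complex.mul_conj]
    have hcast := key2
    rw [← Complex.ofReal_sum] at hcast
    have h2 : ((∑ k ∈ Finset.range K, Complex.normSq (S k) : ℝ) : ℂ) = (((K:ℝ)^2 : ℝ) : ℂ) := by
      rw [hcast]; push_cast; ring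
    exact (Complex.ofReal_inj.mp h2).symm
  have hbound : ∑ k ∈ Finset.range K, Complex.normSq (S k) ≤ K * A^2 := by
    calc ∑ k ∈ Finset.range K, Complex.normSq (S k)
        ≤ ∑ k ∈ Finset.range K, A^2 := by
          apply Finset.sum_le_sum; intro k _
          rw [Complex.normSq_eq_norm_sq]
          have := hSb k
          nlinarith [norm_nonneg (S k)]
      _ = K * A^2 := by simp [Finset.sum_const]
  have hKA : (K:ℝ) ≤ A^2 := by nlinarith
  have : (A^2 : ℝ) < K := by
    rw [hKdef]; push_cast; exact_mod_cast hL
  linarith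

lemma sum_blocks (g : ℕ → ℂ) (t Q : ℕ) :
    ∑ x ∈ Finset.range (t*Q), g x = ∑ i ∈ Finset.range t, ∑ j ∈ Finset.range Q, g (i*Q + j) := by
  induction t with
  | zero => simp
  | succ t ih =>
    rw [Nat.succ_mul, Finset.sum_range_add, ih, Finset.sum_range_succ]

lemma prefix_bound (q d : ℕ) (hq : 2 ≤ q) (c A : ℝ) (hA1 : 1 ≤ A)
    (f : ℕ → ℂ) (hf : QMult q f) (hmod : ∀ n, ‖f n‖ = 1)
    (hb : ∀ L : ℕ, ∀ p : Polynomial ℝ, p.natDegree ≤ d →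
      ‖∑ n ∈ Finset.range (q^L), f n * e (p.eval (n:ℝ))‖
        ≤ A * (q:ℝ) ^ ((1-c) * (L:ℝ))) :
    ∀ L M N : ℕ, ∀ p : Polynomial ℝ, N ≤ q^(L+1) → q^L ∣ M + N → p.natDegree ≤ d →
      ‖∑ n ∈ Finset.range N, f (n + M) * e (p.eval (n:ℝ))‖
        ≤ 2*q*A * ∑ j ∈ Finset.range (L+1), (q:ℝ) ^ ((1-c) * (j:ℝ)) := by
  have hqR : (1:ℝ) ≤ q := by
    have : (1:ℕ) ≤ q := by omega
    exact_mod_cast this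
  intro L
  induction L with
  | zero =>
    intro M N p hN _ _
    calc ‖∑ n ∈ Finset.range N, f (n + M) * e (p.eval (n:ℝ))‖
        ≤ ∑ n ∈ Finset.range N, ‖f (n + M) * e (p.eval (n:ℝ))‖ :=
          norm_sum_le _ _
      _ = ∑ n ∈ Finset.range N, 1 := by
          apply Finset.sum_congr rfl; intro n _
          rw [norm_mul, hmod, e_abs, one_mul]
      _ = (N:ℝ) := by simp
      _ ≤ (q:ℝ) := by
          have : N ≤ q := by simpa using hN
          exact_mod_cast this
      _ ≤ 2*q*A * ∑ j ∈ Finset.range 1, (q:ℝ) ^ ((1-c) * (j:ℝ)) := by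
          simp [Real.rpow_zero]
          nlinarith
  | succ L ih =>
    intro M N p hN hdvd hp
    set Q := q^(L+1) with hQdef
    have hQpos : 0 < Q := Nat.pow_pos (by omega)
    set r := N % Q with hrdef
    set t := N / Q with htdef
    have hNrt : r + t*Q = N := by
      rw [hrdef, htdef, mul_comm]; exact Nat.mod_add_div N Q
    have hrQ : r < Q := Nat.mod_lt N hQpos
    have htq : t ≤ q := by
      have h1 : t * Q ≤ N := by omega
      have h2 : N ≤ Q * q := by
        rw [hQdef, ← pow_succ]; exact hN
      have : t * Q ≤ q * Q := by rw [mul_comm q Q]; omega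
      exact Nat.le_of_mul_le_mul_right this hQpos
    have hdvdMr : Q ∣ M + r := by
      have h2 : Q ∣ (M + r) + t*Q := by
        rw [show (M+r)+t*Q = M+N by omega]; exact hdvd
      exact (Nat.dvd_add_iff_left (dvd_mul_left Q t)).mpr h2
    obtain ⟨u, hu⟩ := hdvdMr
    have hsplit : ∑ n ∈ Finset.range N, f (n + M) * e (p.eval (n:ℝ))
        = (∑ n ∈ Finset.range r, f (n + M) * e (p.eval (n:ℝ)))
          + ∑ i ∈ Finset.range t, ∑ j ∈ Finset.range Q,
              f ((r + (i*Q + j)) + M) * e (p.eval ((r + (i*Q + j) : ℕ):ℝ)) := by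
      rw [← hNrt, Finset.sum_range_add, sum_blocks]
    have hblockval : ∀ i, i ∈ Finset.range t →
        ‖∑ j ∈ Finset.range Q,
            f ((r + (i*Q + j)) + M) * e (p.eval ((r + (i*Q + j) : ℕ):ℝ))‖
          ≤ A * (q:ℝ) ^ ((1-c) * ((L+1 : ℕ):ℝ)) := by
      intro i _
      set pp : Polynomial ℝ := p.comp (Polynomial.X + Polynomial.C ((r + i*Q : ℕ):ℝ)) with hpp
      have hppdeg : pp.natDegree ≤ d := by
        rw [hpp, Polynomial.natDegree_comp, Polynomial.natDegree_X_add_C, mul_one]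
        exact hp
      have hterm : ∀ j, j ∈ Finset.range Q →
          f ((r + (i*Q + j)) + M) * e (p.eval ((r + (i*Q + j) : ℕ):ℝ))
            = f ((u+i)*Q) * (f j * e (pp.eval (j:ℝ))) := by
        intro j hj
        have hj' : j < Q := Finset.mem_range.mp hj
        have hidx : (r + (i*Q + j)) + M = j + (u+i)*Q := by
          have h1 : (u+i)*Q = Q*u + i*Q := by ring
          rw [h1, ← hu]; omega
        have hfval : f (j + (u+i)*Q) = f j * f ((u+i)*Q) := by
          apply hf (L+1) j ((u+i)*Q) hj'
          exact dvd_mul_left Q (u+i)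
        have hev : pp.eval (j:ℝ) = p.eval ((r + (i*Q + j) : ℕ):ℝ) := by
          rw [hpp, Polynomial.eval_comp]
          simp only [Polynomial.eval_add, Polynomial.eval_X, Polynomial.eval_C]
          congr 1
          push_cast; ring
        rw [hidx, hfval, hev]; ring
      rw [Finset.sum_congr rfl hterm, ← Finset.mul_sum]
      rw [norm_mul, hmod, one_mul]
      have := hb (L+1) pp hppdeg
      rw [← hQdef] at this
      exact this
    rw [hsplit]
    have habs1 := ih M r p (le_of_lt hrQ)
      (dvd_trans (pow_dvd_pow q (Nat.le_succ L)) (by rw [hu]; exact Dvd.intro u rfl)) hp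
    have habs2 : ‖∑ i ∈ Finset.range t, ∑ j ∈ Finset.range Q,
          f ((r + (i*Q + j)) + M) * e (p.eval ((r + (i*Q + j) : ℕ):ℝ))‖
        ≤ (q:ℝ) * (A * (q:ℝ) ^ ((1-c) * ((L+1 : ℕ):ℝ))) := by
      calc ‖∑ i ∈ Finset.range t, ∑ j ∈ Finset.range Q,
            f ((r + (i*Q + j)) + M) * e (p.eval ((r + (i*Q + j) : ℕ):ℝ))‖
          ≤ ∑ i ∈ Finset.range t, ‖∑ j ∈ Finset.range Q,
              f ((r + (i*Q + j)) + M) * e (p.eval ((r + (i*Q + j) : ℕ):ℝ))‖ :=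
            norm_sum_le _ _
        _ ≤ ∑ i ∈ Finset.range t, A * (q:ℝ) ^ ((1-c) * ((L+1 : ℕ):ℝ)) :=
            Finset.sum_le_sum hblockval
        _ = (t:ℝ) * (A * (q:ℝ) ^ ((1-c) * ((L+1 : ℕ):ℝ))) := by
            rw [Finset.sum_const, Finset.card_range]; simp
        _ ≤ (q:ℝ) * (A * (q:ℝ) ^ ((1-c) * ((L+1 : ℕ):ℝ))) := by
            apply mul_le_mul_of_nonneg_right _ (by positivity)
            exact_mod_cast htq
    calc ‖_ + _‖
        ≤ ‖∑ n ∈ Finset.range r, f (n + M) * e (p.eval (n:ℝ))‖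
          + ‖∑ i ∈ Finset.range t, ∑ j ∈ Finset.range Q,
              f ((r + (i*Q + j)) + M) * e (p.eval ((r + (i*Q + j) : ℕ):ℝ))‖ :=
          norm_add_le _ _
      _ ≤ 2*q*A * (∑ j ∈ Finset.range (L+1), (q:ℝ) ^ ((1-c) * (j:ℝ)))
          + (q:ℝ) * (A * (q:ℝ) ^ ((1-c) * ((L+1 : ℕ):ℝ))) := add_le_add habs1 habs2
      _ ≤ 2*q*A * ∑ j ∈ Finset.range (L+2), (q:ℝ) ^ ((1-c) * (j:ℝ)) := by
          rw [Finset.sum_range_succ (fun j => (q:ℝ) ^ ((1-c) * (j:ℝ))) (L+1)]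
          have hrp : (0:ℝ) ≤ (q:ℝ) ^ ((1-c) * ((L+1 : ℕ):ℝ)) := by positivity
          have hsumnn : (0:ℝ) ≤ ∑ j ∈ Finset.range (L+1), (q:ℝ) ^ ((1-c) * (j:ℝ)) := by
            apply Finset.sum_nonneg; intro j _; positivity
          nlinarith [mul_nonneg (mul_nonneg (by linarith : (0:ℝ) ≤ (q:ℝ)) (by linarith : (0:ℝ) ≤ A)) hrp]

end Aux

/-- If a `q`-multiplicative sequence satisfies a power-saving bound
against degree-`d` polynomial phases on `q`-adic intervals `[0, q^L)`, then it
satisfies such a bound on all shifted intervals `[M, M+N)`. -/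
theorem stmt17 (q d : ℕ) (hq : 2 ≤ q) (hd : 1 ≤ d) (c A : ℝ) (hc : 0 < c) (hA : 0 < A)
    (f : ℕ → ℂ) (hf : QMult q f) (hmod : ∀ n, ‖f n‖ = 1)
    (h : ∀ L : ℕ, ∀ p : Polynomial ℝ, p.natDegree ≤ d →
      ‖(∑ n ∈ Finset.range (q ^ L), f n * e (p.eval (n : ℝ))) / (q ^ L : ℕ)‖
        ≤ A * (q : ℝ) ^ (-(c * L))) :
    ∃ C > (0 : ℝ), ∀ M N : ℕ, 1 ≤ N → ∀ p : Polynomial ℝ, p.natDegree ≤ d →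
      ‖(∑ n ∈ Finset.range N, f (n + M) * e (p.eval (n : ℝ))) / N‖
        ≤ C * (N : ℝ) ^ (-c) := by
  by_cases hcc : c < 1
  case neg => exact (no_big_c q d hq hd c A (not_lt.mp hcc) hA f hmod h).elim
  have hq0 : (0:ℝ) < q := by positivity
  have hqR1 : (1:ℝ) < q := by
    have : (1:ℕ) < q := by omega
    exact_mod_cast this
  -- A ≥ 1
  have hA1 : (1:ℝ) ≤ A := by
    have h0 := h 0 0 (by simp)
    rw [pow_zero] at h0
    simp only [Finset.range_one, Finset.sum_singleton, Polynomial.eval_zero, Nat.cast_zero,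
      mul_zero, neg_zero, Real.rpow_zero, mul_one, Nat.cast_one, e_zero] at h0
    simpa [hmod 0] using h0
  -- bound on q-adic blocks
  have hb : ∀ L : ℕ, ∀ p : Polynomial ℝ, p.natDegree ≤ d →
      ‖∑ n ∈ Finset.range (q^L), f n * e (p.eval (n:ℝ))‖
        ≤ A * (q:ℝ) ^ ((1-c) * (L:ℝ)) := by
    intro L p hp
    have h1 := h L p hp
    have hKR : (0:ℝ) < ((q^L:ℕ):ℝ) := by positivity
    rw [norm_div, Complex.norm_natCast, div_le_iff₀ hKR] at h1
    calc ‖∑ n ∈ Finset.range (q^L), f n * e (p.eval (n:ℝ))‖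
        ≤ A * (q:ℝ) ^ (-(c * L)) * ((q^L:ℕ):ℝ) := h1
      _ = A * (q:ℝ) ^ ((1-c) * (L:ℝ)) := by
          rw [show ((q^L:ℕ):ℝ) = (q:ℝ) ^ (L:ℝ) by rw [Real.rpow_natCast]; push_cast; ring]
          rw [mul_assoc, ← Real.rpow_add hq0]
          rw [show -(c*(L:ℝ)) + L = (1-c) * (L:ℝ) by ring]
  set ρ : ℝ := (q:ℝ) ^ ((1:ℝ)-c) with hρdef
  have hρ1 : 1 < ρ := by
    rw [hρdef, Real.one_lt_rpow_iff_of_pos hq0]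
    left; exact ⟨hqR1, by linarith⟩
  have hρq : ρ ≤ q := by
    calc ρ = (q:ℝ) ^ ((1:ℝ)-c) := hρdef
      _ ≤ (q:ℝ) ^ (1:ℝ) := Real.rpow_le_rpow_of_exponent_le (le_of_lt hqR1) (by linarith)
      _ = q := Real.rpow_one q
  refine ⟨4*(q:ℝ)*A*q*q/(ρ-1), div_pos (by positivity) (by linarith), ?_⟩
  intro M N hN p hp
  have hNpos : (0:ℝ) < N := by exact_mod_cast hN
  set L := Nat.clog q N with hLdef
  have hNle : N ≤ q^L := Nat.le_pow_clog (by omega) N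
  have hLle : q^L ≤ q * N := by
    rcases Nat.eq_zero_or_pos L with h0 | hpos
    · rw [h0, pow_zero]
      have := Nat.mul_le_mul (show 1 ≤ q by omega) hN
      simpa using this
    · obtain ⟨k, hk⟩ : ∃ k, L = k+1 := ⟨L-1, by omega⟩
      have hnle : ¬ (N ≤ q^k) := by
        intro hle
        have := (Nat.clog_le_iff_le_pow (show 1 < q by omega)).mpr hle
        omega
      have hlt : q^k < N := by omega
      rw [hk, pow_succ]
      calc q^k * q ≤ N * q := Nat.mul_le_mul_right q (by omega)
        _ = q * N := Nat.mul_comm _ _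
  set Q := q^L with hQdef
  have hQpos : 0 < Q := Nat.pow_pos (by omega)
  set d0 := (M+N-1)/Q with hd0
  set rem := (M+N-1)%Q with hremdef
  have hdm : Q * d0 + rem = M + N - 1 := Nat.div_add_mod (M+N-1) Q
  have hrem : rem < Q := Nat.mod_lt _ hQpos
  set E := Q * d0 + Q with hE
  have hEdvd : Q ∣ E := ⟨d0+1, by rw [hE]; ring⟩
  have hMNE : M + N ≤ E := by omega
  have hEub : E ≤ M + N - 1 + Q := by omega
  set N₂ := E - (M+N) with hN2
  set N₁ := E - M with hN1
  have h2Q : 2*Q ≤ q^(L+1) := by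
    rw [pow_succ, ← hQdef]
    calc 2*Q = Q*2 := by ring
      _ ≤ Q*q := Nat.mul_le_mul_left Q hq
  have hN1le : N₁ ≤ q^(L+1) := by omega
  have hN2le : N₂ ≤ q^(L+1) := by omega
  have hd1 : Q ∣ M + N₁ := by rw [show M + N₁ = E by omega]; exact hEdvd
  have hd2 : Q ∣ (M+N) + N₂ := by rw [show (M+N) + N₂ = E by omega]; exact hEdvd
  set p2 : Polynomial ℝ := p.comp (Polynomial.X + Polynomial.C (N:ℝ)) with hp2
  have hp2deg : p2.natDegree ≤ d := by
    rw [hp2, Polynomial.natDegree_comp, Polynomial.natDegree_X_add_C, mul_one]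
    exact hp
  have hsum : ∑ n ∈ Finset.range N₁, f (n + M) * e (p.eval (n:ℝ))
      = (∑ n ∈ Finset.range N, f (n + M) * e (p.eval (n:ℝ)))
        + ∑ k ∈ Finset.range N₂, f (k + (M+N)) * e (p2.eval (k:ℝ)) := by
    rw [show N₁ = N + N₂ by omega, Finset.sum_range_add]
    congr 1
    apply Finset.sum_congr rfl; intro k _
    rw [show N + k + M = k + (M + N) by omega]
    congr 1
    rw [hp2, Polynomial.eval_comp]
    simp only [Polynomial.eval_add, Polynomial.eval_X, Polynomial.eval_C]
    congr 1
    push_cast; ring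
  have habs1 := prefix_bound q d hq c A hA1 f hf hmod hb L M N₁ p hN1le hd1 hp
  have habs2 := prefix_bound q d hq c A hA1 f hf hmod hb L (M+N) N₂ p2 hN2le hd2 hp2deg
  set G : ℝ := ∑ j ∈ Finset.range (L+1), (q:ℝ) ^ ((1-c) * (j:ℝ)) with hG
  have hTG : ‖∑ n ∈ Finset.range N, f (n + M) * e (p.eval (n:ℝ))‖
      ≤ 4*(q:ℝ)*A*G := by
    have heq : (∑ n ∈ Finset.range N, f (n + M) * e (p.eval (n:ℝ)))
        = (∑ n ∈ Finset.range N₁, f (n + M) * e (p.eval (n:ℝ)))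
          - ∑ k ∈ Finset.range N₂, f (k + (M+N)) * e (p2.eval (k:ℝ)) := by
      rw [hsum]; ring
    rw [heq, sub_eq_add_neg]
    refine (norm_add_le _ _).trans ?_
    rw [norm_neg]
    calc ‖∑ n ∈ Finset.range N₁, f (n + M) * e (p.eval (n:ℝ))‖
          + ‖∑ k ∈ Finset.range N₂, f (k + (M+N)) * e (p2.eval (k:ℝ))‖
        ≤ 2*(q:ℝ)*A*G + 2*(q:ℝ)*A*G := add_le_add habs1 habs2
      _ = 4*(q:ℝ)*A*G := by ring
  -- bound G
  have hGgeom : G = (ρ^(L+1) - 1)/(ρ - 1) := by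
    rw [hG]
    rw [show (∑ j ∈ Finset.range (L+1), (q:ℝ) ^ ((1-c) * (j:ℝ)))
        = ∑ j ∈ Finset.range (L+1), ρ^j from
      Finset.sum_congr rfl fun j _ => by
        rw [hρdef, Real.rpow_mul hq0.le, Real.rpow_natCast]]
    exact geom_sum_eq (ne_of_gt hρ1) (L+1)
  have hρL : ρ^L ≤ ρ * (N:ℝ) ^ ((1:ℝ)-c) := by
    have h1 : (ρ:ℝ)^L = ((q:ℝ)^L) ^ ((1:ℝ)-c) := by
      rw [← Real.rpow_natCast ρ L, hρdef, ← Real.rpow_natCast (q:ℝ) L,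
        ← Real.rpow_mul hq0.le, ← Real.rpow_mul hq0.le]
      rw [show ((1:ℝ)-c) * (L:ℝ) = (L:ℝ) * ((1:ℝ)-c) by ring]
    have h2 : ((q:ℝ)^L : ℝ) ≤ (q:ℝ) * N := by
      have hQR : ((Q:ℕ):ℝ) = (q:ℝ)^L := by rw [hQdef]; push_cast; ring
      have hcst := (Nat.cast_le (α := ℝ)).mpr hLle
      push_cast at hcst
      rw [hQR] at hcst
      exact hcst
    have h3 : (((q:ℝ)^L : ℝ)) ^ ((1:ℝ)-c) ≤ ((q:ℝ) * N) ^ ((1:ℝ)-c) :=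
      Real.rpow_le_rpow (by positivity) h2 (by linarith)
    have h4 : ((q:ℝ) * N) ^ ((1:ℝ)-c) = ρ * (N:ℝ) ^ ((1:ℝ)-c) := by
      rw [Real.mul_rpow hq0.le (by positivity), hρdef]
    rw [h1]
    rw [h4] at h3
    exact h3
  have hGbound : G ≤ (q:ℝ)*q*(N:ℝ) ^ ((1:ℝ)-c)/(ρ-1) := by
    rw [hGgeom]
    have hρpos : (0:ℝ) < ρ - 1 := by linarith
    rw [div_le_div_iff₀ hρpos hρpos]
    have hNc : (0:ℝ) ≤ (N:ℝ) ^ ((1:ℝ)-c) := by positivity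
    have hstep : ρ^(L+1) ≤ (q:ℝ)*q*(N:ℝ) ^ ((1:ℝ)-c) := by
      calc ρ^(L+1) = ρ * ρ^L := by ring
        _ ≤ ρ * (ρ * (N:ℝ) ^ ((1:ℝ)-c)) :=
            mul_le_mul_of_nonneg_left hρL (by linarith)
        _ ≤ (q:ℝ) * ((q:ℝ) * (N:ℝ) ^ ((1:ℝ)-c)) := by
            have hρ0 : (0:ℝ) ≤ ρ := by linarith
            have : ρ * (N:ℝ) ^ ((1:ℝ)-c) ≤ (q:ℝ) * (N:ℝ) ^ ((1:ℝ)-c) :=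
              mul_le_mul_of_nonneg_right hρq hNc
            nlinarith
        _ = (q:ℝ)*q*(N:ℝ) ^ ((1:ℝ)-c) := by ring
    nlinarith
  -- conclude
  have hNsplit : (N:ℝ) ^ ((1:ℝ)-c) = (N:ℝ) ^ (-c) * N := by
    rw [show (1:ℝ)-c = -c + 1 by ring, Real.rpow_add hNpos, Real.rpow_one]
  rw [norm_div, Complex.norm_natCast, div_le_iff₀ hNpos]
  have hGnn : (0:ℝ) ≤ G := by
    rw [hG]; apply Finset.sum_nonneg; intro j _; positivity
  calc ‖∑ n ∈ Finset.range N, f (n + M) * e (p.eval (n:ℝ))‖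
      ≤ 4*(q:ℝ)*A*G := hTG
    _ ≤ 4*(q:ℝ)*A*((q:ℝ)*q*(N:ℝ) ^ ((1:ℝ)-c)/(ρ-1)) := by
        apply mul_le_mul_of_nonneg_left hGbound (by positivity)
    _ = 4*(q:ℝ)*A*q*q/(ρ-1) * (N:ℝ) ^ (-c) * N := by
        rw [hNsplit]; field_simp
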